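/- arXiv:0906.5546 — 3 statements merged into one kernel-verified Lean document; each statement's English description precedes it below -/
import Mathlib

section
/- Let Y given X=x, W=w be uniform on (0, (x²+(w−x)²)^{−1}), so F(y|x,w) = y(x²+(w−x)²) for 0 < y < (x²+(w−x)²)^{−1}, and let W given X=x be N(x,1) with density f(w|x) = φ(w−x). Then ∫ F(y|x,w) (∂f(w|x)/∂x) dw = 0 for all (y,x) in the joint support, i.e. A-collapsibility over W holds, even though neither Y ⊥ W | X nor W ⊥ X holds. -/
open MeasureTheory

lemma odd_int_zero (g : ℝ → ℝ) (hg : ∀ t, g (-t) = - g t) : (∫ t, g t) = 0 := by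
  have h := integral_neg_eq_self g (volume : Measure ℝ)
  simp only [hg, integral_neg] at h
  linarith

/-- With F(y|x,w) = y(x²+(w−x)²) (uniform response) and
f(w|x) = φ(w−x) (W|X=x ~ N(x,1), so ∂f(w|x)/∂x = (w−x)φ(w−x)), we have
∫ F(y|x,w) (∂f(w|x)/∂x) dw = 0 for all (y,x), i.e. A-collapsibility over W
holds, even though neither Y ⊥ W | X nor W ⊥ X holds. -/
theorem stmt_5
    (φ : ℝ → ℝ)
    (hφ : ∀ t, φ t = (Real.sqrt (2 * Real.pi))⁻¹ * Real.exp (-t ^ 2 / 2))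
    (F : ℝ → ℝ → ℝ → ℝ)
    (hF : ∀ y x w, F y x w = y * (x ^ 2 + (w - x) ^ 2))
    (f : ℝ → ℝ → ℝ)
    (hf : ∀ w x, f w x = φ (w - x))
    (hfderiv : ∀ w x, deriv (fun x' => f w x') x = (w - x) * φ (w - x)) :
    (∀ y x, (∫ w, F y x w * deriv (fun x' => f w x') x) = 0)
    ∧ ¬ (∀ y x w w', F y x w = F y x w')    -- Y ⊥ W | X fails
    ∧ ¬ (∀ w x x', f w x = f w x') := by    -- W ⊥ X fails
  refine ⟨?_, ?_, ?_⟩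
  · intro y x
    have h1 : (fun w => F y x w * deriv (fun x' => f w x') x)
        = fun w => (fun t => y * (x ^ 2 + t ^ 2) * (t * φ t)) (w - x) := by
      funext w
      simp [hF, hfderiv]
    rw [h1, integral_sub_right_eq_self (fun t => y * (x ^ 2 + t ^ 2) * (t * φ t)) x]
    apply odd_int_zero
    intro t
    have : φ (-t) = φ t := by simp [hφ]
    rw [this]; ring
  · intro h
    have h0 := h 1 0 0 1
    rw [hF, hF] at h0
    norm_num at h0
  · intro h
    have h0 := h 0 0 2
    rw [hf, hf, hφ, hφ] at h0
    have hc : (Real.sqrt (2 * Real.pi))⁻¹ > 0 := by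
      positivity
    have h1 := mul_left_cancel₀ (ne_of_gt hc) h0
    norm_num at h1
    have h2 : Real.exp (-2) < 1 := Real.exp_lt_one_iff.mpr (by norm_num)
    linarith
end

section
/- Let W be binary with values in {1,2}. The distribution dependence function is collapsible over W if and only if it is both homogeneous over W and A-collapsible over W. That is, C^W = C_H^W ∩ C_A^W when W is binary. -/
/-- For a binary background variable W ∈ {1,2}, the distribution
dependence function is collapsible over W if and only if it is both homogeneous
over W and A-collapsible over W:  C^W = C_H^W ∩ C_A^W. -/
theorem stmt_10
    (F1 F2 : ℝ → ℝ → ℝ)          -- F1 y x = F(y|x,1), F2 y x = F(y|x,2)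
    (Fm : ℝ → ℝ → ℝ)             -- Fm y x = F(y|x)
    (f1 f2 : ℝ → ℝ)              -- conditional pmf of W given X = x
    (hpmf : ∀ x, f1 x + f2 x = 1)
    (hmix : ∀ y x, Fm y x = F1 y x * f1 x + F2 y x * f2 x)
    (hF1 : ∀ y, Differentiable ℝ (fun x => F1 y x))
    (hF2 : ∀ y, Differentiable ℝ (fun x => F2 y x))
    (hf1 : Differentiable ℝ f1) (hf2 : Differentiable ℝ f2) :
    -- collapsibility:
    (∀ y x, deriv (fun x' => F1 y x') x = deriv (fun x' => Fm y x') x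
          ∧ deriv (fun x' => F2 y x') x = deriv (fun x' => Fm y x') x)
    ↔ -- homogeneity:
      ((∀ y x, deriv (fun x' => F1 y x') x = deriv (fun x' => F2 y x') x)
      -- and A-collapsibility:
      ∧ (∀ y x, deriv (fun x' => F1 y x') x * f1 x
               + deriv (fun x' => F2 y x') x * f2 x
             = deriv (fun x' => Fm y x') x)) := by
  constructor
  · intro h
    refine ⟨fun y x => (h y x).1.trans (h y x).2.symm, fun y x => ?_⟩
    rw [(h y x).1, (h y x).2, ← mul_add, hpmf x, mul_one]
  · intro ⟨hhom, hA⟩ y x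
    have h1 : deriv (fun x' => F1 y x') x = deriv (fun x' => Fm y x') x := by
      rw [← hA y x, hhom y x, ← mul_add, hpmf x, mul_one]
    exact ⟨h1, (hhom y x).symm.trans h1⟩
end

section
/- Let X > 0 and W be real-valued with F(w|x) = Φ(w/x), so F_x(w|x) = −(w/x²)φ(w/x), and let Y given (X,W)=(x,w) be uniform on (w−x, w+x), so F(y|x,w) = (y+x−w)/(2x) and F_w(y|x,w) = −1/(2x) for w−x < y < w+x. Then ∫_{−∞}^{∞} F_w(y|x,w) F_x(w|x) dw = 0 for all (y,x) in the support, so A-collapsibility of the quantile regression coefficient over W holds, even though neither Y ⊥ W | X nor W ⊥ X holds. -/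
open MeasureTheory

/-- An odd function on ℝ has integral zero (no integrability needed). -/
lemma odd_integral_zero (f : ℝ → ℝ) (hf : ∀ x, f (-x) = -f x) :
    (∫ x, f x) = 0 := by
  have h1 : (∫ x, f (-x)) = ∫ x, f x := integral_neg_eq_self f volume
  have h2 : (∫ x, f (-x)) = ∫ x, -f x := by simp_rw [hf]
  rw [integral_neg] at h2
  linarith [h1, h2]

/-- With X > 0, F(w|x) = Φ(w/x) so F_x(w|x) = −(w/x²)φ(w/x), and
Y|(X,W)=(x,w) uniform on (w−x,w+x) so F(y|x,w) = (y+x−w)/(2x) and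
F_w(y|x,w) = −1/(2x), we get ∫ F_w(y|x,w) F_x(w|x) dw = 0 on the support, so
A-collapsibility of the quantile regression coefficient over W holds, even
though neither Y ⊥ W | X nor W ⊥ X holds. -/
theorem stmt_15
    (φ Φ : ℝ → ℝ)
    (hφ : ∀ t, φ t = (Real.sqrt (2 * Real.pi))⁻¹ * Real.exp (-t ^ 2 / 2))
    (hΦ : ∀ t, Φ t = ∫ s in Set.Iic t, φ s)
    (F : ℝ → ℝ → ℝ → ℝ)          -- F y x w = F(y|x,w)
    (Fwx : ℝ → ℝ → ℝ)            -- Fwx w x = F(w|x)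
    (hFwx : ∀ w x, 0 < x → Fwx w x = Φ (w / x))
    (hF : ∀ y x w, 0 < x → w - x < y → y < w + x → F y x w = (y + x - w) / (2 * x))
    -- the stated partial derivatives:
    (hFx : ∀ w x, 0 < x →
      deriv (fun x' => Fwx w x') x = -(w / x ^ 2) * φ (w / x))
    (hFw : ∀ y x w, 0 < x → w - x < y → y < w + x →
      deriv (fun w' => F y x w') w = -(1 / (2 * x))) :
    (∀ y x : ℝ, 0 < x →
      (∫ w, (-(1 / (2 * x))) * (-(w / x ^ 2) * φ (w / x))) = 0)
    ∧ ¬ (∀ y x w w', 0 < x → w - x < y → y < w + x → w' - x < y → y < w' + x →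
          F y x w = F y x w')                           -- Y ⊥ W | X fails
    ∧ ¬ (∀ w x x', 0 < x → 0 < x' → Fwx w x = Fwx w x') := by  -- W ⊥ X fails
  refine ⟨?_, ?_, ?_⟩
  · -- the integral vanishes since the integrand is odd in w
    intro y x hx
    apply odd_integral_zero
    intro w
    rw [hφ, hφ]
    have h : (-w / x) ^ 2 = (w / x) ^ 2 := by ring
    rw [h]
    ring
  · -- Y ⊥ W | X fails: F 0 1 0 ≠ F 0 1 (1/2)
    intro h
    have h1 := hF 0 1 0 one_pos (by norm_num) (by norm_num)
    have h2 := hF 0 1 (1/2) one_pos (by norm_num) (by norm_num)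
    have h3 := h 0 1 0 (1/2) one_pos (by norm_num) (by norm_num) (by norm_num) (by norm_num)
    rw [h1, h2] at h3
    norm_num at h3
  · -- W ⊥ X fails: Φ(1) ≠ Φ(1/2)
    intro h
    have h3 := h 1 1 2 one_pos two_pos
    rw [hFwx 1 1 one_pos, hFwx 1 2 two_pos] at h3
    norm_num at h3
    rw [hΦ, hΦ] at h3
    -- φ is integrable
    have hint : Integrable φ := by
      have h0 : Integrable (fun t : ℝ => Real.exp (-(1/2 : ℝ) * t ^ 2)) :=
        integrable_exp_neg_mul_sq (by norm_num)
      have : φ = fun t => (Real.sqrt (2 * Real.pi))⁻¹ * Real.exp (-(1/2 : ℝ) * t ^ 2) := by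
        funext t; rw [hφ]; ring_nf
      rw [this]
      exact h0.const_mul _
    have hpos : ∀ t, 0 < φ t := by
      intro t; rw [hφ]
      positivity
    have hsub : ((∫ s in Set.Iic (1:ℝ), φ s) - ∫ s in Set.Iic (1/2 : ℝ), φ s)
        = ∫ s in (1/2 : ℝ)..1, φ s :=
      intervalIntegral.integral_Iic_sub_Iic hint.integrableOn hint.integrableOn
    have hgt : 0 < ∫ s in (1/2 : ℝ)..1, φ s :=
      intervalIntegral.intervalIntegral_pos_of_pos hint.intervalIntegrable hpos (by norm_num)
    rw [h3] at hsub
    simp at hsub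
    linarith [hgt, hsub]
end
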